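/- If κ < μ are infinite cardinals with cf(μ) = cf(κ), then D(μ,κ) > μ. -/

import Mathlib

open Cardinal

/-- A family `D` of subsets of `α` is dense in `[α]^{κ₂}`. -/
def IsDenseIn {α : Type u} (D : Set (Set α)) (κ₂ : Cardinal.{u}) : Prop :=
  ∀ Y : Set α, #Y = κ₂ → ∃ Z ∈ D, Z ⊆ Y

/-- The density `D(λ,κ₁,κ₂)`. -/
noncomputable def Density (l κ₁ κ₂ : Cardinal.{u}) : Cardinal.{u} :=
  sInf { c : Cardinal.{u} | ∃ D : Set (Set l.out),
    (∀ X ∈ D, #X = κ₁) ∧ IsDenseIn D κ₂ ∧ c = #D }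

section Aux
open Ordinal Set


noncomputable def nuF {ι : Type} [LinearOrder ι] [WellFoundedLT ι]
    (κ : Cardinal.{0}) (g : ι → Cardinal.{0}) : ι → Cardinal.{0} :=
  (wellFounded_lt (α := ι)).fix fun i IH =>
    Order.succ (κ + (⨆ j : Set.Iio i, IH j.1 j.2) + g i)

lemma nuF_def {ι : Type} [LinearOrder ι] [WellFoundedLT ι]
    (κ : Cardinal.{0}) (g : ι → Cardinal.{0}) (i : ι) :
    nuF κ g i = Order.succ (κ + (⨆ j : Set.Iio i, nuF κ g j.1) + g i) :=
  (wellFounded_lt (α := ι)).fix_eq _ i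

section nuFlems
variable {ι : Type} [LinearOrder ι] [WellFoundedLT ι] {κ : Cardinal.{0}} {g : ι → Cardinal.{0}}

lemma sup_nuF_lt (i : ι) : (⨆ j : Set.Iio i, nuF κ g j.1) < nuF κ g i := by
  rw [nuF_def]
  calc (⨆ j : Set.Iio i, nuF κ g j.1) ≤ κ + (⨆ j : Set.Iio i, nuF κ g j.1) + g i := by
        exact le_add_right le_add_self
    _ < _ := Order.lt_succ _

lemma nuF_lt_nuF {j i : ι} (h : j < i) : nuF κ g j < nuF κ g i :=
  lt_of_le_of_lt (le_ciSup (Cardinal.bddAbove_range _) (⟨j, h⟩ : Set.Iio i)) (sup_nuF_lt i)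

lemma kappa_lt_nuF (i : ι) : κ < nuF κ g i := by
  rw [nuF_def]
  calc κ ≤ κ + (⨆ j : Set.Iio i, nuF κ g j.1) + g i := le_add_right (self_le_add_right _ _)
    _ < _ := Order.lt_succ _

lemma g_lt_nuF (i : ι) : g i < nuF κ g i := by
  rw [nuF_def]
  calc g i ≤ κ + (⨆ j : Set.Iio i, nuF κ g j.1) + g i := le_add_self
    _ < _ := Order.lt_succ _

end nuFlems

lemma key (κ μ : Cardinal.{0}) (hκ : ℵ₀ ≤ κ) (hκμ : κ < μ)
    (hcof : μ.ord.cof = κ.ord.cof)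
    (D : Set (Set μ.ord.ToType)) (hD1 : ∀ X ∈ D, #X = κ)
    (hD2 : ∀ Y : Set μ.ord.ToType, #Y = κ → ∃ Z ∈ D, Z ⊆ Y)
    (hle : #D ≤ μ) : False := by
  classical
  have hμ : ℵ₀ ≤ μ := hκ.trans hκμ.le
  have hθκ : κ.ord.cof ≤ κ := Ordinal.cof_ord_le κ
  have hθ0 : ℵ₀ ≤ κ.ord.cof := Ordinal.aleph0_le_cof.2 (Cardinal.isSuccLimit_ord hκ)
  set ι : Type := (κ.ord.cof).ord.ToType with hι
  haveI : IsWellOrder ι (· < ·) := isWellOrder_lt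
  have hmkβ : #μ.ord.ToType = μ := by rw [Cardinal.mk_toType, Cardinal.card_ord]
  -- typein on ι
  have htyi : ∀ t : ι, Ordinal.typein (α := ι) (· < ·) t < (κ.ord.cof).ord := by
    intro t
    have := Ordinal.typein_lt_type (α := ι) (· < ·) t
    rwa [Ordinal.type_toType] at this
  have hmkIio : ∀ i : ι, #(Set.Iio i) < κ.ord.cof := by
    intro i
    have h1 : #(Set.Iio i) = (Ordinal.typein (α := ι) (· < ·) i).card :=
      Ordinal.card_typein (r := ((· < ·) : ι → ι → Prop)) i
    rw [h1]
    exact Cardinal.lt_ord.1 (htyi i)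
  -- fundamental sequences
  obtain ⟨G, hG⟩ := Ordinal.exists_fundamental_sequence κ.ord
  obtain ⟨F, hF⟩ := Ordinal.exists_fundamental_sequence μ.ord
  have hFlt : ∀ b (hb : b < (κ.ord.cof).ord), F b (by rw [hcof]; exact hb) < μ.ord := by
    intro b hb
    exact (Ordinal.lt_blsub F b _).trans_le hF.blsub_eq.le
  set g : ι → Cardinal.{0} :=
    fun t => (F (Ordinal.typein (α := ι) (· < ·) t) (by rw [hcof]; exact htyi t)).card with hg
  set kseq : ι → Cardinal.{0} :=
    fun t => (G (Ordinal.typein (α := ι) (· < ·) t) (htyi t)).card + 1 with hkseq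
  have hGlt : ∀ t : ι, G (Ordinal.typein (α := ι) (· < ·) t) (htyi t) < κ.ord := by
    intro t
    exact (Ordinal.lt_blsub G _ _).trans_le hG.blsub_eq.le
  have kseq_lt : ∀ t, kseq t < κ := by
    intro t
    refine Cardinal.add_lt_of_lt hκ ?_ (one_lt_aleph0.trans_le hκ)
    exact Cardinal.lt_ord.1 (hGlt t)
  haveI hNι : Nonempty ι := by
    refine (Ordinal.nonempty_toType_iff).2 (fun h => ?_)
    have h2 := Cardinal.card_ord (κ.ord.cof)
    rw [h, Ordinal.card_zero] at h2
    exact (Cardinal.aleph0_pos.trans_le hθ0).ne' h2.symm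
  have hmkι : #ι = κ.ord.cof := by rw [hι, Cardinal.mk_toType, Cardinal.card_ord]
  have sum_kseq : Cardinal.sum kseq = κ := by
    apply le_antisymm
    · calc Cardinal.sum kseq ≤ Cardinal.sum (fun _ : ι => κ) :=
            Cardinal.sum_le_sum _ _ (fun t => (kseq_lt t).le)
        _ = #ι * κ := Cardinal.sum_const' ι κ
        _ ≤ κ := by
            rw [hmkι, Cardinal.mul_eq_max hθ0 hκ]
            exact max_le hθκ le_rfl
    · have h1 : κ.ord ≤ ⨆ t : ι, (G (Ordinal.typein (α := ι) (· < ·) t) (htyi t)) + 1 := by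
        conv_lhs => rw [← hG.blsub_eq]
        apply Ordinal.blsub_le
        intro b hb
        obtain ⟨t, hbt⟩ : ∃ t : ι, Ordinal.typein (α := ι) (· < ·) t = b :=
          ⟨Ordinal.enum (α := ι) (· < ·) ⟨b, by rw [Ordinal.type_toType]; exact hb⟩,
            Ordinal.typein_enum _ _⟩
        have hGb : G b hb = G (Ordinal.typein (α := ι) (· < ·) t) (htyi t) := by
          subst hbt; rfl
        rw [hGb]
        calc G (Ordinal.typein (α := ι) (· < ·) t) (htyi t)
            < G (Ordinal.typein (α := ι) (· < ·) t) (htyi t) + 1 := by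
              rw [Ordinal.add_one_eq_succ]; exact Order.lt_succ _
          _ ≤ _ := le_ciSup (Ordinal.bddAbove_range _) t
      have h2 := Ordinal.card_iSup_le_sum_card
        (fun t : ι => (G (Ordinal.typein (α := ι) (· < ·) t) (htyi t)) + 1)
      have h3 : (fun t : ι => ((G (Ordinal.typein (α := ι) (· < ·) t) (htyi t)) + 1).card) = kseq := by
        funext t
        rw [Ordinal.add_one_eq_succ, Ordinal.card_succ]
      calc κ = κ.ord.card := (Cardinal.card_ord κ).symm
        _ ≤ (⨆ t : ι, (G (Ordinal.typein (α := ι) (· < ·) t) (htyi t)) + 1).card :=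
            Ordinal.card_le_card h1
        _ ≤ Cardinal.sum (fun t : ι => ((G (Ordinal.typein (α := ι) (· < ·) t) (htyi t)) + 1).card) := h2
        _ = Cardinal.sum kseq := by rw [h3]
  -- the type β := μ.ord.ToType
  haveI : IsWellOrder μ.ord.ToType (· < ·) := isWellOrder_lt
  set rank : μ.ord.ToType → Cardinal.{0} :=
    fun x => (Ordinal.typein (α := μ.ord.ToType) (· < ·) x).card with hrank
  have rank_lt : ∀ x, rank x < μ := by
    intro x
    have h1 := Ordinal.typein_lt_type (α := μ.ord.ToType) (· < ·) x
    rw [Ordinal.type_toType] at h1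
    exact Cardinal.lt_ord.1 h1
  set M' : Cardinal.{0} → Set μ.ord.ToType := fun c => {x | rank x < c} with hM'
  have M'_mono : ∀ {c d : Cardinal.{0}}, c ≤ d → M' c ⊆ M' d :=
    fun h x hx => lt_of_lt_of_le hx h
  have mk_M' : ∀ c < μ, #(M' c) = c := by
    intro c hc
    have hco : c.ord < Ordinal.type (α := μ.ord.ToType) (· < ·) := by
      rw [Ordinal.type_toType]; exact Cardinal.ord_lt_ord.2 hc
    set e := Ordinal.enum (α := μ.ord.ToType) (· < ·) ⟨c.ord, hco⟩ with he
    have hte : Ordinal.typein (α := μ.ord.ToType) (· < ·) e = c.ord := Ordinal.typein_enum _ _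
    have hset : M' c = {x | x < e} := by
      ext x
      simp only [hM', Set.mem_setOf_eq]
      constructor
      · intro hx
        exact (Ordinal.typein_lt_typein (· < ·)).1 (by rw [hte]; exact Cardinal.lt_ord.2 hx)
      · intro hx
        exact Cardinal.lt_ord.1 (by rw [← hte]; exact (Ordinal.typein_lt_typein (· < ·)).2 hx)
    rw [hset]
    have h4 : #{x : μ.ord.ToType | x < e} = (Ordinal.typein (α := μ.ord.ToType) (· < ·) e).card :=
      Ordinal.card_typein (r := ((· < ·) : μ.ord.ToType → μ.ord.ToType → Prop)) e
    rw [h4, hte, Cardinal.card_ord]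
  have g_lt_mu : ∀ t : ι, g t < μ := fun t => Cardinal.lt_ord.1 (hFlt _ (htyi t))
  have nu_lt_mu : ∀ i : ι, nuF κ g i < μ := by
    intro i
    induction i using WellFoundedLT.induction with
    | _ i IH =>
    rw [nuF_def]
    have hS : (⨆ j : Set.Iio i, nuF κ g j.1) < μ := by
      refine Ordinal.iSup_lt ?_ (fun j => IH j.1 j.2)
      rw [hcof]
      exact hmkIio i
    have hlt : κ + (⨆ j : Set.Iio i, nuF κ g j.1) + g i < μ :=
      Cardinal.add_lt_of_lt hμ (Cardinal.add_lt_of_lt hμ hκμ hS) (g_lt_mu i)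
    rcases (Order.succ_le_of_lt hlt).lt_or_eq with h | h
    · exact h
    · exfalso
      have hax : ℵ₀ ≤ κ + (⨆ j : Set.Iio i, nuF κ g j.1) + g i :=
        hκ.trans (le_add_right (self_le_add_right _ _))
      have hreg := Cardinal.isRegular_succ hax
      rw [h] at hreg
      have hco := hreg.cof_eq
      rw [hcof] at hco
      exact absurd (hco ▸ (hθκ.trans hκμ.le)) (by simp [lt_irrefl]; exact absurd hco (ne_of_lt (lt_of_le_of_lt hθκ hκμ)))
  -- the filtration and its blocks
  set M : ι → Set μ.ord.ToType := fun i => ⋃ j : Set.Iio i, M' (nuF κ g j.1) with hM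
  have M'_subset_M : ∀ {j i : ι}, j < i → M' (nuF κ g j) ⊆ M i := by
    intro j i hj
    exact Set.subset_iUnion (fun j' : Set.Iio i => M' (nuF κ g j'.1)) ⟨j, hj⟩
  have M_subset_M' : ∀ i : ι, M i ⊆ M' (nuF κ g i) :=
    fun i => Set.iUnion_subset fun j => M'_mono (nuF_lt_nuF j.2).le
  have nu_inf : ∀ i : ι, ℵ₀ ≤ nuF κ g i := fun i => hκ.trans (kappa_lt_nuF i).le
  have mk_M_lt : ∀ i : ι, #(M i) < nuF κ g i := by
    intro i
    have h1 : #(M i) ≤ #(Set.Iio i) * ⨆ j : Set.Iio i, #(M' (nuF κ g j.1)) :=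
      Cardinal.mk_iUnion_le _
    have h2 : (fun j : Set.Iio i => #(M' (nuF κ g j.1))) = fun j : Set.Iio i => nuF κ g j.1 := by
      funext j
      exact mk_M' _ (nu_lt_mu j.1)
    rw [h2] at h1
    refine h1.trans_lt (Cardinal.mul_lt_of_lt (nu_inf i) ?_ (sup_nuF_lt i))
    exact (hmkIio i).trans_le (hθκ.trans (kappa_lt_nuF i).le)
  set C : ι → Set μ.ord.ToType := fun i => M' (nuF κ g i) \ M i with hC
  have mk_diff : ∀ (i : ι) (B : Set μ.ord.ToType), B ⊆ M' (nuF κ g i) → #B < nuF κ g i →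
      #((M' (nuF κ g i) \ B : Set μ.ord.ToType)) = nuF κ g i := by
    intro i B hBsub hBlt
    have h1 : #((M' (nuF κ g i) \ B : Set μ.ord.ToType)) + #B = nuF κ g i := by
      rw [Cardinal.mk_diff_add_mk hBsub, mk_M' _ (nu_lt_mu i)]
    by_contra hne
    have hlt : #((M' (nuF κ g i) \ B : Set μ.ord.ToType)) < nuF κ g i := by
      refine lt_of_le_of_ne ?_ hne
      conv_rhs => rw [← h1]
      exact le_self_add
    exact absurd h1 (ne_of_lt (Cardinal.add_lt_of_lt (nu_inf i) hlt hBlt))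
  have C_sub : ∀ i : ι, C i ⊆ M' (nuF κ g i) := fun i => Set.diff_subset
  have C_disj : ∀ {j i : ι}, j < i → ∀ {x}, x ∈ C i → x ∈ C j → False := by
    intro j i hj x hxi hxj
    exact hxi.2 (M'_subset_M hj (C_sub j hxj))
  -- enumerating D
  have hκβ : κ ≤ #μ.ord.ToType := by rw [hmkβ]; exact hκμ.le
  obtain ⟨Y₀, hY₀⟩ := Cardinal.le_mk_iff_exists_set.1 hκβ
  obtain ⟨Z₀, hZ₀, -⟩ := hD2 Y₀ hY₀
  obtain ⟨φ⟩ : Nonempty (↥D ↪ μ.ord.ToType) := (Cardinal.le_def _ _).1 (hle.trans_eq hmkβ.symm)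
  set T : μ.ord.ToType → Set μ.ord.ToType :=
    fun b => if h : ∃ Z : ↥D, φ Z = b then (h.choose : ↥D).1 else Z₀ with hT
  have T_surj : ∀ Z ∈ D, ∃ b, T b = Z := by
    intro Z hZ
    refine ⟨φ ⟨Z, hZ⟩, ?_⟩
    have h : ∃ Z' : ↥D, φ Z' = φ ⟨Z, hZ⟩ := ⟨⟨Z, hZ⟩, rfl⟩
    rw [hT]
    dsimp only
    rw [dif_pos h]
    have h2 := φ.injective h.choose_spec
    rw [h2]
  set pick : ι → Set μ.ord.ToType → Set μ.ord.ToType :=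
    fun i Z => if h : (Z ∩ C i).Nonempty then {h.choose} else ∅ with hpick
  have pick_sub : ∀ i Z, pick i Z ⊆ C i := by
    intro i Z x hx
    rw [hpick] at hx
    dsimp only at hx
    split at hx
    · next h =>
      rw [Set.mem_singleton_iff] at hx
      rw [hx]
      exact h.choose_spec.2
    · exact absurd hx (Set.notMem_empty x)
  have pick_mem : ∀ i Z (h : (Z ∩ C i).Nonempty), h.choose ∈ pick i Z := by
    intro i Z h
    rw [hpick]
    dsimp only
    rw [dif_pos h]
    rfl
  set A : ι → Set μ.ord.ToType := fun i => ⋃ b : M i, pick i (T b.1) with hA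
  have A_sub : ∀ i, A i ⊆ C i := fun i => Set.iUnion_subset fun b => pick_sub i _
  have mk_A_lt : ∀ i, #(A i) < nuF κ g i := by
    intro i
    have h1 : #(A i) ≤ #(M i) * ⨆ b : M i, #(pick i (T b.1)) := Cardinal.mk_iUnion_le _
    have h2 : (⨆ b : M i, #(pick i (T b.1))) ≤ 1 := by
      rcases isEmpty_or_nonempty (M i) with h | h
      · rw [ciSup_of_empty]
        exact bot_le
      · refine ciSup_le' ?_
        intro b
        rw [hpick]
        dsimp only
        split
        · exact le_of_eq (Cardinal.mk_singleton _)
        · simp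
    calc #(A i) ≤ #(M i) * 1 := h1.trans (mul_le_mul_right h2 _)
      _ = #(M i) := mul_one _
      _ < _ := mk_M_lt i
  -- choosing the pieces of Y
  have hYex : ∀ i : ι, ∃ Y' : Set μ.ord.ToType, Y' ⊆ C i \ A i ∧ #Y' = kseq i := by
    intro i
    have hid : C i \ A i = M' (nuF κ g i) \ (M i ∪ A i) := by
      rw [hC]
      dsimp only
      rw [Set.diff_diff]
    have hBsub : M i ∪ A i ⊆ M' (nuF κ g i) :=
      Set.union_subset (M_subset_M' i) ((A_sub i).trans (C_sub i))
    have hB : #((M i ∪ A i : Set _)) < nuF κ g i :=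
      (Cardinal.mk_union_le _ _).trans_lt
        (Cardinal.add_lt_of_lt (nu_inf i) (mk_M_lt i) (mk_A_lt i))
    have hmk := mk_diff i _ hBsub hB
    rw [← hid] at hmk
    have hle2 : kseq i ≤ #((C i \ A i : Set _)) := by
      rw [hmk]
      exact ((kseq_lt i).trans (kappa_lt_nuF i)).le
    obtain ⟨p, hp1, hp2⟩ := Cardinal.le_mk_iff_exists_subset.1 hle2
    exact ⟨p, hp1, hp2⟩
  choose Yf hYf1 hYf2 using hYex
  -- the diagonal set Y
  have Yf_subC : ∀ i, Yf i ⊆ C i := fun i => (hYf1 i).trans Set.diff_subset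
  set Y : Set μ.ord.ToType := ⋃ i : ι, Yf i with hY
  have Yf_disj : Pairwise (Function.onFun Disjoint Yf) := by
    intro i j hij
    rw [Function.onFun]
    rw [Set.disjoint_left]
    intro x hxi hxj
    rcases lt_trichotomy i j with h | h | h
    · exact C_disj h (Yf_subC j hxj) (Yf_subC i hxi)
    · exact hij h
    · exact C_disj h (Yf_subC i hxi) (Yf_subC j hxj)
  have mkY : #Y = κ := by
    rw [hY, Cardinal.mk_iUnion_eq_sum_mk Yf_disj]
    have h5 : (fun i : ι => #(Yf i)) = kseq := funext fun i => hYf2 i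
    rw [h5, sum_kseq]
  obtain ⟨Z, hZD, hZY⟩ := hD2 Y mkY
  have hZκ : #Z = κ := hD1 Z hZD
  obtain ⟨b, hTb⟩ := T_surj Z hZD
  -- b lands in some level
  have g_unbdd : ∀ c, c < μ → ∃ t : ι, c ≤ g t := by
    intro c hc
    have h1 : c.ord < Ordinal.blsub _ F := by
      rw [hF.blsub_eq]
      exact Cardinal.ord_lt_ord.2 hc
    obtain ⟨b', hb', hcb⟩ := Ordinal.lt_blsub_iff.1 h1
    have hb'' : b' < κ.ord.cof.ord := by rw [← hcof]; exact hb'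
    obtain ⟨t, hbt⟩ : ∃ t : ι, Ordinal.typein (α := ι) (· < ·) t = b' :=
      ⟨Ordinal.enum (α := ι) (· < ·) ⟨b', by rw [Ordinal.type_toType]; exact hb''⟩,
        Ordinal.typein_enum _ _⟩
    subst hbt
    refine ⟨t, ?_⟩
    calc c = c.ord.card := (Cardinal.card_ord c).symm
      _ ≤ _ := Ordinal.card_le_card hcb
  obtain ⟨i₀, hi₀⟩ : ∃ i₀ : ι, b ∈ M' (nuF κ g i₀) := by
    obtain ⟨i₀, hgi⟩ := g_unbdd (rank b) (rank_lt b)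
    exact ⟨i₀, lt_of_le_of_lt hgi (g_lt_nuF i₀)⟩
  have claim1 : ∀ i : ι, i₀ < i → Z ∩ C i = ∅ := by
    intro i hi
    by_contra hne
    have hne' : (Z ∩ C i).Nonempty := Set.nonempty_iff_ne_empty.2 hne
    have hzspec := hne'.choose_spec
    have hbMi : b ∈ M i := M'_subset_M hi hi₀
    have hzA : hne'.choose ∈ A i := by
      rw [hA]
      refine Set.mem_iUnion.2 ⟨⟨b, hbMi⟩, ?_⟩
      have h6 : pick i (T b) = pick i Z := by rw [hTb]
      rw [h6]
      exact pick_mem i Z hne'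
    have hzY : hne'.choose ∈ Y := hZY hzspec.1
    obtain ⟨i', hzi'⟩ := Set.mem_iUnion.1 hzY
    have hii : i' = i := by
      rcases lt_trichotomy i' i with h | h | h
      · exact absurd (Yf_subC i' hzi') (fun hh => C_disj h hzspec.2 hh)
      · exact h
      · exact absurd hzspec.2 (fun hh => C_disj h (Yf_subC i' hzi') hh)
    subst hii
    exact (hYf1 i' hzi').2 hzA
  have claim2 : Z ⊆ ⋃ j : Set.Iic i₀, Yf j.1 := by
    intro x hx
    obtain ⟨j, hj⟩ := Set.mem_iUnion.1 (hZY hx)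
    rcases le_or_gt j i₀ with h | h
    · exact Set.mem_iUnion.2 ⟨⟨j, h⟩, hj⟩
    · exfalso
      have hxx : x ∈ Z ∩ C j := ⟨hx, Yf_subC j hj⟩
      rw [claim1 j h] at hxx
      exact hxx
  have hIic : #(Set.Iic i₀) < κ.ord.cof := by
    rw [← Set.Iio_insert]
    refine (Cardinal.mk_insert_le).trans_lt ?_
    exact Cardinal.add_lt_of_lt hθ0 (hmkIio i₀) (one_lt_aleph0.trans_le hθ0)
  have hfin : κ ≤ #(⋃ j : Set.Iic i₀, Yf j.1) :=
    hZκ.symm.le.trans (Cardinal.mk_le_mk_of_subset claim2)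
  have hsup : (⨆ j : Set.Iic i₀, #(Yf j.1)) < κ := by
    refine Ordinal.iSup_lt hIic (fun j => ?_)
    rw [hYf2 j.1]
    exact kseq_lt j.1
  have hlt : #(⋃ j : Set.Iic i₀, Yf j.1) < κ :=
    (Cardinal.mk_iUnion_le _).trans_lt
      (Cardinal.mul_lt_of_lt hκ (hIic.trans_le hθκ) hsup)
  exact absurd (hfin.trans_lt hlt) (lt_irrefl κ)

end Aux

theorem density_gt_of_cof_eq (κ μ : Cardinal.{0}) (hκ : ℵ₀ ≤ κ) (hκμ : κ < μ)
    (hcof : μ.ord.cof = κ.ord.cof) :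
    μ < Density μ κ κ := by
  have hSne : { c : Cardinal.{0} | ∃ D : Set (Set μ.out),
      (∀ X ∈ D, #X = κ) ∧ IsDenseIn D κ ∧ c = #D }.Nonempty :=
    ⟨#{X : Set μ.out | #X = κ}, {X : Set μ.out | #X = κ}, fun X hX => hX,
      fun Y hY => ⟨Y, hY, subset_rfl⟩, rfl⟩
  obtain ⟨D, hD1, hD2, hc⟩ := csInf_mem hSne
  rw [Density]
  by_contra hnot
  rw [not_lt] at hnot
  have hle : #D ≤ μ := hc ▸ hnot
  have hmkβ : #μ.ord.ToType = μ := by rw [Cardinal.mk_toType, Cardinal.card_ord]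
  obtain ⟨e⟩ : Nonempty (μ.out ≃ μ.ord.ToType) := Cardinal.eq.1 (by rw [Cardinal.mk_out, hmkβ])
  set D' : Set (Set μ.ord.ToType) := (fun Z => e '' Z) '' D with hD'
  have hD1' : ∀ X ∈ D', #X = κ := by
    rintro X ⟨Z, hZ, rfl⟩
    rw [Cardinal.mk_image_eq e.injective]
    exact hD1 Z hZ
  have hD2' : ∀ Y' : Set μ.ord.ToType, #Y' = κ → ∃ Z' ∈ D', Z' ⊆ Y' := by
    intro Y' hY'
    have hpre : #(e ⁻¹' Y') = κ := by
      have him : e '' (e ⁻¹' Y') = Y' := Set.image_preimage_eq Y' e.surjective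
      rw [← Cardinal.mk_image_eq (s := e ⁻¹' Y') e.injective, him, hY']
    obtain ⟨Z, hZD, hZsub⟩ := hD2 (e ⁻¹' Y') hpre
    refine ⟨e '' Z, ⟨Z, hZD, rfl⟩, ?_⟩
    calc e '' Z ⊆ e '' (e ⁻¹' Y') := Set.image_mono hZsub
      _ = Y' := Set.image_preimage_eq Y' e.surjective
  have hle' : #D' ≤ μ := (Cardinal.mk_image_le).trans hle
  exact key κ μ hκ hκμ hcof D' hD1' hD2' hle'
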